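/- In the Heawood graph, every edge lies on exactly eight cycles of length 6. -/
import Mathlib


/-- A directed `g`-cycle of a simple graph `G`: an injective map `c : ZMod g → V`
with `c i` adjacent to `c (i+1)` for all `i`. -/
def IsDirCycleOn {V : Type*} (G : SimpleGraph V) (g : ℕ) (c : ZMod g → V) : Prop :=
  Function.Injective c ∧ ∀ i : ZMod g, G.Adj (c i) (c (i + 1))

/-- A sequence of `k` distinct vertices with consecutive vertices adjacent. -/
def IsPathSeq {V : Type*} (G : SimpleGraph V) (k : ℕ) (v : Fin k → V) : Prop :=
  Function.Injective v ∧ ∀ (j : ℕ) (h : j + 1 < k),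
    G.Adj (v ⟨j, Nat.lt_of_succ_lt h⟩) (v ⟨j + 1, h⟩)

/-- A coherent `g`-cycle orientation of level `k` of `G`: a set `D` of directed
`g`-cycles of `G` containing, for every `g`-cycle of `G`, exactly one of its two
directions (one representative up to rotation), and such that every sequence of `k`
distinct vertices `v 0, …, v (k-1)` with consecutive vertices adjacent occurs as a
consecutive segment `(c i, c (i+1), …, c (i+k-1))` of exactly one `c ∈ D`. -/
def IsCoherentOrientation {V : Type*} (G : SimpleGraph V) (g k : ℕ)
    (D : Set (ZMod g → V)) : Prop :=
  (∀ c ∈ D, IsDirCycleOn G g c) ∧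
  (∀ c : ZMod g → V, IsDirCycleOn G g c →
    ∃! c', c' ∈ D ∧
      ((∃ r : ZMod g, ∀ i, c' i = c (i + r)) ∨ (∃ r : ZMod g, ∀ i, c' i = c (r - i)))) ∧
  (∀ v : Fin k → V, IsPathSeq G k v →
    ∃! c, c ∈ D ∧ ∃ i : ZMod g, ∀ j : Fin k, c (i + ((j : ℕ) : ZMod g)) = v j)

/-- Two directed `g`-cycles are related iff one is a rotation of the other or a
rotation of the reversal of the other; the quotient by this relation is the set of
(undirected) `g`-cycles of `G`. -/
def DirCycleRel {V : Type*} (G : SimpleGraph V) (g : ℕ)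
    (c c' : {c : ZMod g → V // IsDirCycleOn G g c}) : Prop :=
  (∃ r : ZMod g, ∀ i, c'.1 i = c.1 (i + r)) ∨ (∃ r : ZMod g, ∀ i, c'.1 i = c.1 (r - i))

/-- The Heawood graph: vertex set `ZMod 14`, `i` adjacent to `i+1`, together with the
extra edges `{2x, 2x+5}` for every `x`. -/
def heawoodGraph : SimpleGraph (ZMod 14) :=
  SimpleGraph.fromRel (fun i j =>
    j = i + 1 ∨ ∃ x : ZMod 14, i = 2 * x ∧ j = 2 * x + 5)

instance : DecidableRel heawoodGraph.Adj := fun a b =>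
  inferInstanceAs (Decidable (a ≠ b ∧ _))

def hadj (a b : ZMod 14) : Bool :=
  (b == a + 1) || (a == b + 1) || (a.val % 2 == 0 && b == a + 5) || (b.val % 2 == 0 && a == b + 5)

lemma hadj_iff : ∀ a b : ZMod 14, hadj a b = true ↔ heawoodGraph.Adj a b := by decide

def univ14 : List (ZMod 14) := List.finRange 14

def nbrs (n : ZMod 14) : List (ZMod 14) := univ14.filter (fun m => hadj n m)

def good (u w a b c d : ZMod 14) : Bool :=
  hadj u w && (hadj w a && (hadj a b && (hadj b c && (hadj c d && (hadj d u &&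
  ((u != w) && ((u != a) && ((u != b) && ((u != c) && ((u != d) &&
  ((w != a) && ((w != b) && ((w != c) && ((w != d) &&
  ((a != b) && ((a != c) && ((a != d) && ((b != c) && ((b != d) && (c != d))))))))))))))))))))

def cyclesZ (u w : ZMod 14) : List (ZMod 14 × ZMod 14 × ZMod 14 × ZMod 14) :=
  (nbrs w).flatMap fun a => (nbrs a).flatMap fun b => (nbrs b).flatMap fun c =>
    ((nbrs c).filter fun d => good u w a b c d).map fun d => (a, b, c, d)

lemma mem_nbrs {n m : ZMod 14} : m ∈ nbrs n ↔ hadj n m = true :=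
  ⟨fun h => (List.mem_filter.1 h).2, fun h => List.mem_filter.2 ⟨List.mem_finRange m, h⟩⟩

lemma mem_cyclesZ {u w a b c d : ZMod 14} :
    (a, b, c, d) ∈ cyclesZ u w ↔ good u w a b c d = true := by
  constructor
  · intro h
    simp only [cyclesZ, List.mem_flatMap, List.mem_map, List.mem_filter] at h
    obtain ⟨a', _, b', _, c', _, d', ⟨_, hg⟩, he⟩ := h
    obtain ⟨rfl, rfl, rfl, rfl⟩ := Prod.mk.injEq .. ▸ (by
      exact ⟨(congrArg Prod.fst he), congrArg (·.2.1) he, congrArg (·.2.2.1) he,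
        congrArg (·.2.2.2) he⟩ : a' = a ∧ b' = b ∧ c' = c ∧ d' = d)
    exact hg
  · intro hg
    have h := hg
    simp only [good, Bool.and_eq_true] at h
    simp only [cyclesZ, List.mem_flatMap, List.mem_map, List.mem_filter]
    exact ⟨a, mem_nbrs.2 h.2.1, b, mem_nbrs.2 h.2.2.1, c, mem_nbrs.2 h.2.2.2.1, d,
      ⟨mem_nbrs.2 h.2.2.2.2.1, hg⟩, rfl⟩



def tup (u w : ZMod 14) (t : ZMod 14 × ZMod 14 × ZMod 14 × ZMod 14) : ZMod 6 → ZMod 14 :=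
  fun i => match i.val with
  | 0 => u | 1 => w | 2 => t.1 | 3 => t.2.1 | 4 => t.2.2.1 | _ => t.2.2.2

lemma isDirCycle_tup_iff (u w a b c d : ZMod 14) :
    IsDirCycleOn heawoodGraph 6 (tup u w (a, b, c, d)) ↔ good u w a b c d = true := by
  have hofn : List.ofFn (fun i : Fin 6 => tup u w (a,b,c,d) i) = [u,w,a,b,c,d] := rfl
  simp only [good, Bool.and_eq_true, bne_iff_ne, hadj_iff]
  constructor
  · rintro ⟨hinj, hA⟩
    have a1 : heawoodGraph.Adj u w := hA 0
    have a2 : heawoodGraph.Adj w a := hA 1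
    have a3 : heawoodGraph.Adj a b := hA 2
    have a4 : heawoodGraph.Adj b c := hA 3
    have a5 : heawoodGraph.Adj c d := hA 4
    have a6 : heawoodGraph.Adj d u := hA 5
    have n1 : u ≠ w := fun h => absurd (hinj (show tup u w (a,b,c,d) 0 = tup u w (a,b,c,d) 1 from h)) (by decide)
    have n2 : u ≠ a := fun h => absurd (hinj (show tup u w (a,b,c,d) 0 = tup u w (a,b,c,d) 2 from h)) (by decide)
    have n3 : u ≠ b := fun h => absurd (hinj (show tup u w (a,b,c,d) 0 = tup u w (a,b,c,d) 3 from h)) (by decide)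
    have n4 : u ≠ c := fun h => absurd (hinj (show tup u w (a,b,c,d) 0 = tup u w (a,b,c,d) 4 from h)) (by decide)
    have n5 : u ≠ d := fun h => absurd (hinj (show tup u w (a,b,c,d) 0 = tup u w (a,b,c,d) 5 from h)) (by decide)
    have n6 : w ≠ a := fun h => absurd (hinj (show tup u w (a,b,c,d) 1 = tup u w (a,b,c,d) 2 from h)) (by decide)
    have n7 : w ≠ b := fun h => absurd (hinj (show tup u w (a,b,c,d) 1 = tup u w (a,b,c,d) 3 from h)) (by decide)
    have n8 : w ≠ c := fun h => absurd (hinj (show tup u w (a,b,c,d) 1 = tup u w (a,b,c,d) 4 from h)) (by decide)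
    have n9 : w ≠ d := fun h => absurd (hinj (show tup u w (a,b,c,d) 1 = tup u w (a,b,c,d) 5 from h)) (by decide)
    have n10 : a ≠ b := fun h => absurd (hinj (show tup u w (a,b,c,d) 2 = tup u w (a,b,c,d) 3 from h)) (by decide)
    have n11 : a ≠ c := fun h => absurd (hinj (show tup u w (a,b,c,d) 2 = tup u w (a,b,c,d) 4 from h)) (by decide)
    have n12 : a ≠ d := fun h => absurd (hinj (show tup u w (a,b,c,d) 2 = tup u w (a,b,c,d) 5 from h)) (by decide)
    have n13 : b ≠ c := fun h => absurd (hinj (show tup u w (a,b,c,d) 3 = tup u w (a,b,c,d) 4 from h)) (by decide)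
    have n14 : b ≠ d := fun h => absurd (hinj (show tup u w (a,b,c,d) 3 = tup u w (a,b,c,d) 5 from h)) (by decide)
    have n15 : c ≠ d := fun h => absurd (hinj (show tup u w (a,b,c,d) 4 = tup u w (a,b,c,d) 5 from h)) (by decide)
    exact ⟨a1, a2, a3, a4, a5, a6, n1, n2, n3, n4, n5, n6, n7, n8, n9, n10, n11, n12, n13, n14, n15⟩
  · rintro ⟨h1, h2, h3, h4, h5, h6, n1, n2, n3, n4, n5, n6, n7, n8, n9, n10, n11, n12, n13, n14, n15⟩
    constructor
    · have hnd : (List.ofFn (fun i : Fin 6 => tup u w (a,b,c,d) i)).Nodup := by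
        rw [hofn]
        simp only [List.nodup_cons, List.mem_cons, List.nodup_nil, List.not_mem_nil,
          not_or, and_true]
        tauto
      exact List.nodup_ofFn.mp hnd
    · intro i
      rcases i with ⟨iv, hlt⟩
      interval_cases iv
      · exact h1
      · exact h2
      · exact h3
      · exact h4
      · exact h5
      · exact h6


lemma dirCycleRel_equivalence {V : Type*} (G : SimpleGraph V) (g : ℕ) :
    Equivalence (DirCycleRel G g) := by
  constructor
  · intro c; exact Or.inl ⟨0, fun i => by rw [add_zero]⟩
  · rintro c c' (⟨r, hr⟩ | ⟨r, hr⟩)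
    · exact Or.inl ⟨-r, fun i => by rw [hr]; congr 1; ring⟩
    · exact Or.inr ⟨r, fun i => by rw [hr]; congr 1; ring⟩
  · rintro c c' c'' (⟨r, hr⟩ | ⟨r, hr⟩) (⟨s, hs⟩ | ⟨s, hs⟩)
    · exact Or.inl ⟨s + r, fun i => by rw [hs, hr]; congr 1; ring⟩
    · exact Or.inr ⟨s + r, fun i => by rw [hs, hr]; congr 1; ring⟩
    · exact Or.inr ⟨r - s, fun i => by rw [hs, hr]; congr 1; ring⟩
    · exact Or.inl ⟨r - s, fun i => by rw [hs, hr]; congr 1; ring⟩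

lemma quot_mk_eq_iff {V : Type*} (G : SimpleGraph V) (g : ℕ)
    (c c' : {c : ZMod g → V // IsDirCycleOn G g c}) :
    Quot.mk (DirCycleRel G g) c = Quot.mk (DirCycleRel G g) c' ↔ DirCycleRel G g c c' :=
  ⟨fun h => (dirCycleRel_equivalence G g).eqvGen_iff.mp (Quot.eq.mp h), Quot.sound⟩

lemma tup_eq {u w : ZMod 14} (c : ZMod 6 → ZMod 14) (h0 : c 0 = u) (h1 : c 1 = w) :
    tup u w (c 2, c 3, c 4, c 5) = c := by
  funext i
  rcases i with ⟨iv, hlt⟩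
  interval_cases iv
  · exact h0.symm
  · exact h1.symm
  · rfl
  · rfl
  · rfl
  · rfl

def eS (u w : ZMod 14) :
    {c : ZMod 6 → ZMod 14 // IsDirCycleOn heawoodGraph 6 c ∧ c 0 = u ∧ c 1 = w} ≃
    {t : ZMod 14 × ZMod 14 × ZMod 14 × ZMod 14 // IsDirCycleOn heawoodGraph 6 (tup u w t)} where
  toFun s := ⟨(s.1 2, s.1 3, s.1 4, s.1 5), by rw [tup_eq s.1 s.2.2.1 s.2.2.2]; exact s.2.1⟩
  invFun t := ⟨tup u w t.1, t.2, rfl, rfl⟩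
  left_inv s := Subtype.ext (tup_eq s.1 s.2.2.1 s.2.2.2)
  right_inv t := Subtype.ext rfl

lemma card_aux (u w : ZMod 14) :
    Nat.card {q : Quot (DirCycleRel heawoodGraph 6) //
      ∃ c : {c : ZMod 6 → ZMod 14 // IsDirCycleOn heawoodGraph 6 c},
        q = Quot.mk _ c ∧ ∃ i : ZMod 6, c.1 i = u ∧ c.1 (i + 1) = w} =
    Nat.card {c : ZMod 6 → ZMod 14 //
      IsDirCycleOn heawoodGraph 6 c ∧ c 0 = u ∧ c 1 = w} := by
  refine (Nat.card_eq_of_bijective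
    (fun s => ⟨Quot.mk _ ⟨s.1, s.2.1⟩, ⟨s.1, s.2.1⟩, rfl, 0, s.2.2.1, s.2.2.2⟩)
    ⟨?_, ?_⟩).symm
  · intro s t h
    have h' : Quot.mk (DirCycleRel heawoodGraph 6) ⟨s.1, s.2.1⟩ =
        Quot.mk (DirCycleRel heawoodGraph 6) ⟨t.1, t.2.1⟩ := congrArg Subtype.val h
    rw [quot_mk_eq_iff] at h'
    rcases h' with ⟨r, hr⟩ | ⟨r, hr⟩
    · -- hr : t.1 i = s.1 (i + r)
      have he : s.1 (0 + r) = s.1 0 := by rw [← hr 0, t.2.2.1, s.2.2.1]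
      have hr0 : r = 0 := by have := s.2.1.1 he; rwa [zero_add] at this
      exact Subtype.ext (funext fun i => by rw [hr i, hr0, add_zero])
    · -- hr : t.1 i = s.1 (r - i)
      have he0 : s.1 (r - 0) = s.1 0 := by rw [← hr 0, t.2.2.1, s.2.2.1]
      have hr0 : r = 0 := by have := s.2.1.1 he0; rwa [sub_zero] at this
      have he1 : s.1 (r - 1) = s.1 1 := by rw [← hr 1, t.2.2.2, s.2.2.2]
      have := s.2.1.1 he1
      rw [hr0] at this
      exact absurd this (by decide)
  · rintro ⟨q, c, hq, i, h0, h1⟩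
    have hc' : IsDirCycleOn heawoodGraph 6 (fun j => c.1 (i + j)) := by
      constructor
      · intro x y hxy
        exact add_left_cancel (c.2.1 hxy)
      · intro j
        simpa [add_assoc] using c.2.2 (i + j)
    refine ⟨⟨fun j => c.1 (i + j), hc', by simpa using h0, h1⟩, ?_⟩
    refine Subtype.ext ?_
    show Quot.mk _ (⟨fun j => c.1 (i + j), hc'⟩ :
      {c : ZMod 6 → ZMod 14 // IsDirCycleOn heawoodGraph 6 c}) = q
    rw [hq]
    exact Quot.sound (Or.inl ⟨-i, fun j => by show c.1 j = c.1 (i + (j + -i)); congr 1; ring⟩)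

/-- In the Heawood graph, every edge lies on exactly eight cycles of length 6
(an edge lies on a cycle iff its endpoints occur consecutively along the cycle). -/
theorem heawood_edge_on_eight_hexagons (u w : ZMod 14) (huw : heawoodGraph.Adj u w) :
    Nat.card {q : Quot (DirCycleRel heawoodGraph 6) //
      ∃ c : {c : ZMod 6 → ZMod 14 // IsDirCycleOn heawoodGraph 6 c},
        q = Quot.mk _ c ∧ ∃ i : ZMod 6, c.1 i = u ∧ c.1 (i + 1) = w} = 8 := by
  rw [card_aux u w]
  have e2 : {t : ZMod 14 × ZMod 14 × ZMod 14 × ZMod 14 //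
      IsDirCycleOn heawoodGraph 6 (tup u w t)} ≃ {t // t ∈ (cyclesZ u w).toFinset} :=
    Equiv.subtypeEquivRight (fun t => by
      obtain ⟨a, b, c, d⟩ := t
      rw [isDirCycle_tup_iff, List.mem_toFinset, mem_cyclesZ])
  rw [Nat.card_congr ((eS u w).trans e2), Nat.card_eq_finsetCard]
  exact (by decide : ∀ u w : ZMod 14, heawoodGraph.Adj u w →
    (cyclesZ u w).toFinset.card = 8) u w huw
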